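/- Let G be a topological group acting continuously on a compact Hausdorff space X with at least three points, let L ≤ G be a dense subgroup, and let (β, f) be a B-cocycle of L over X. Then β extends to a B-cocycle of G with the same function f: there exists β̄ : G × X → ℝ such that β̄(l, x) = β(l, x) for all l ∈ L and x ∈ X, β̄ is a cocycle (β̄(g₁g₂, x) = β̄(g₁, g₂x) + β̄(g₂, x)), x ↦ β̄(g, x) is continuous for every g ∈ G, and β̄(g, x) + β̄(g, y) = f(gx, gy) − f(x, y) for all g ∈ G and all x ≠ y in X. -/

import Mathlib

theorem stmt13 {G X : Type*} [Group G] [TopologicalSpace G] [IsTopologicalGroup G]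
    [TopologicalSpace X] [CompactSpace X] [T2Space X]
    [MulAction G X] [ContinuousSMul G X]
    (hX : ∃ x y z : X, x ≠ y ∧ x ≠ z ∧ y ≠ z)
    (L : Subgroup G) (hL : Dense (L : Set G))
    (β : L → X → ℝ) (f : X → X → ℝ)
    (hcoc : ∀ l₁ l₂ : L, ∀ x : X, β (l₁ * l₂) x = β l₁ ((l₂ : G) • x) + β l₂ x)
    (hcont : ∀ l : L, Continuous (β l))
    (hf : ContinuousOn (fun q : X × X => f q.1 q.2) {q : X × X | q.1 ≠ q.2})
    (hrel : ∀ l : L, ∀ x y : X, x ≠ y →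
      f ((l : G) • x) ((l : G) • y) - f x y = β l x + β l y) :
    ∃ b : G → X → ℝ,
      (∀ l : L, ∀ x : X, b (l : G) x = β l x) ∧
      (∀ g₁ g₂ : G, ∀ x : X, b (g₁ * g₂) x = b g₁ (g₂ • x) + b g₂ x) ∧
      (∀ g : G, Continuous (b g)) ∧
      (∀ g : G, ∀ x y : X, x ≠ y → b g x + b g y = f (g • x) (g • y) - f x y) := by
  classical
  obtain ⟨a, a', a'', hab, hac, hbc⟩ := hX
  have hopen : IsOpen {q : X × X | q.1 ≠ q.2} := isOpen_ne_fun continuous_fst continuous_snd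
  set F : G → X → X → ℝ := fun g x y => f (g • x) (g • y) - f x y with hFdef
  -- continuity of g ↦ F g x y
  have contFg : ∀ x y : X, x ≠ y → Continuous fun g : G => F g x y := by
    intro x y hxy
    have hmap : Continuous fun g : G => ((g • x, g • y) : X × X) :=
      (continuous_id.smul continuous_const).prodMk (continuous_id.smul continuous_const)
    have h := hf.comp_continuous hmap (fun g => (MulAction.injective g).ne hxy)
    exact h.sub continuous_const
  have hFl : ∀ (l : L) (x y : X), x ≠ y → F (l : G) x y = β l x + β l y :=
    fun l x y h => hrel l x y h
  -- symmetry of F by density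
  have hsym : ∀ (x y : X), x ≠ y → ∀ g : G, F g x y = F g y x := by
    intro x y hxy g
    have heq : (fun g : G => F g x y) = fun g => F g y x := by
      apply Continuous.ext_on hL (contFg x y hxy) (contFg y x hxy.symm)
      intro g hg
      obtain ⟨l, rfl⟩ : ∃ l : L, (l : G) = g := ⟨⟨g, hg⟩, rfl⟩
      simp only [hFl l x y hxy, hFl l y x hxy.symm]
      ring
    exact congrFun heq g
  -- well-definedness by density
  have key : ∀ (x y z y' z' : X), x ≠ y → x ≠ z → y ≠ z → x ≠ y' → x ≠ z' → y' ≠ z' →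
      ∀ g : G, F g x y + F g x z - F g y z = F g x y' + F g x z' - F g y' z' := by
    intro x y z y' z' h1 h2 h3 h4 h5 h6 g
    have heq : (fun g : G => F g x y + F g x z - F g y z)
        = fun g => F g x y' + F g x z' - F g y' z' := by
      apply Continuous.ext_on hL
        (((contFg x y h1).add (contFg x z h2)).sub (contFg y z h3))
        (((contFg x y' h4).add (contFg x z' h5)).sub (contFg y' z' h6))
      intro g hg
      obtain ⟨l, rfl⟩ : ∃ l : L, (l : G) = g := ⟨⟨g, hg⟩, rfl⟩
      simp only [Pi.add_apply, Pi.sub_apply, hFl l x y h1, hFl l x z h2, hFl l y z h3,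
        hFl l x y' h4, hFl l x z' h5, hFl l y' z' h6]
      ring
    exact congrFun heq g
  -- choice of auxiliary points
  have hpick : ∀ x : X, ∃ y z : X, x ≠ y ∧ x ≠ z ∧ y ≠ z := by
    intro x
    by_cases hxa : x = a
    · exact ⟨a', a'', by rw [hxa]; exact hab, by rw [hxa]; exact hac, hbc⟩
    · by_cases hxb : x = a'
      · exact ⟨a, a'', by rw [hxb]; exact Ne.symm hab, by rw [hxb]; exact hbc, hac⟩
      · exact ⟨a, a', hxa, hxb, hab⟩
  choose Y Z hY hZ hYZ using hpick
  set bb : G → X → ℝ := fun g x => (F g x (Y x) + F g x (Z x) - F g (Y x) (Z x)) / 2 with hbb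
  have bval : ∀ (g : G) (x y z : X), x ≠ y → x ≠ z → y ≠ z →
      bb g x = (F g x y + F g x z - F g y z) / 2 := by
    intro g x y z h1 h2 h3
    rw [hbb]
    simp only
    rw [key x (Y x) (Z x) y z (hY x) (hZ x) (hYZ x) h1 h2 h3 g]
  refine ⟨bb, ?_, ?_, ?_, ?_⟩
  · -- extends β
    intro l x
    rw [hbb]
    simp only
    rw [hFl l x (Y x) (hY x), hFl l x (Z x) (hZ x), hFl l (Y x) (Z x) (hYZ x)]
    ring
  · -- cocycle
    intro g₁ g₂ x
    have hFmul : ∀ (y z : X), F (g₁ * g₂) y z = F g₁ (g₂ • y) (g₂ • z) + F g₂ y z := by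
      intro y z
      simp only [hFdef, mul_smul]
      ring
    have hb1 : bb g₁ (g₂ • x) =
        (F g₁ (g₂ • x) (g₂ • Y x) + F g₁ (g₂ • x) (g₂ • Z x)
          - F g₁ (g₂ • Y x) (g₂ • Z x)) / 2 :=
      bval g₁ (g₂ • x) (g₂ • Y x) (g₂ • Z x)
        ((MulAction.injective g₂).ne (hY x)) ((MulAction.injective g₂).ne (hZ x))
        ((MulAction.injective g₂).ne (hYZ x))
    rw [bval (g₁ * g₂) x (Y x) (Z x) (hY x) (hZ x) (hYZ x),
      bval g₂ x (Y x) (Z x) (hY x) (hZ x) (hYZ x), hb1,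
      hFmul x (Y x), hFmul x (Z x), hFmul (Y x) (Z x)]
    ring
  · -- continuity
    intro g
    rw [continuous_iff_continuousAt]
    intro x₀
    have hne1 : x₀ ≠ Y x₀ := hY x₀
    have hne2 : x₀ ≠ Z x₀ := hZ x₀
    have hU : IsOpen ({x : X | x ≠ Y x₀} ∩ {x : X | x ≠ Z x₀}) :=
      (isOpen_ne).inter (isOpen_ne)
    have hx₀U : x₀ ∈ ({x : X | x ≠ Y x₀} ∩ {x : X | x ≠ Z x₀}) := ⟨hne1, hne2⟩
    have hev : bb g =ᶠ[nhds x₀]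
        fun x => (F g x (Y x₀) + F g x (Z x₀) - F g (Y x₀) (Z x₀)) / 2 := by
      filter_upwards [hU.mem_nhds hx₀U] with x hx
      exact bval g x (Y x₀) (Z x₀) hx.1 hx.2 (hYZ x₀)
    have contFx : ∀ y : X, x₀ ≠ y → ContinuousAt (fun x => F g x y) x₀ := by
      intro y hxy
      have h1 : ContinuousAt (fun q : X × X => f q.1 q.2) (g • x₀, g • y) :=
        hf.continuousAt (hopen.mem_nhds ((MulAction.injective g).ne hxy))
      have h2 : ContinuousAt (fun q : X × X => f q.1 q.2) (x₀, y) :=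
        hf.continuousAt (hopen.mem_nhds hxy)
      have hm1 : ContinuousAt (fun x : X => ((g • x, g • y) : X × X)) x₀ :=
        ((continuous_const.smul continuous_id).prodMk continuous_const).continuousAt
      have hm2 : ContinuousAt (fun x : X => ((x, y) : X × X)) x₀ :=
        (continuous_id.prodMk continuous_const).continuousAt
      have hc1 : ContinuousAt
          ((fun q : X × X => f q.1 q.2) ∘ fun x : X => ((g • x, g • y) : X × X)) x₀ :=
        ContinuousAt.comp h1 hm1
      have hc2 : ContinuousAt
          ((fun q : X × X => f q.1 q.2) ∘ fun x : X => ((x, y) : X × X)) x₀ :=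
        ContinuousAt.comp h2 hm2
      exact hc1.sub hc2
    have hcont' : ContinuousAt
        (fun x => (F g x (Y x₀) + F g x (Z x₀) - F g (Y x₀) (Z x₀)) / 2) x₀ := by
      exact (((contFx (Y x₀) hne1).add (contFx (Z x₀) hne2)).sub
        continuousAt_const).div_const 2
    exact hcont'.congr hev.symm
  · -- relation
    intro g x y hxy
    have hpick2 : ∃ w : X, x ≠ w ∧ y ≠ w := by
      by_cases h1 : x ≠ a ∧ y ≠ a
      · exact ⟨a, h1⟩
      by_cases h2 : x ≠ a' ∧ y ≠ a'
      · exact ⟨a', h2⟩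
      push_neg at h1 h2
      refine ⟨a'', ?_, ?_⟩
      · intro hxc
        rcases Classical.em (x = a) with hxa | hxa
        · exact hac (hxa ▸ hxc)
        · have hya := h1 hxa
          rcases Classical.em (x = a') with hxb | hxb
          · exact hbc (hxb ▸ hxc)
          · have hyb := h2 hxb
            exact hab (hya ▸ hyb.symm ▸ rfl)
      · intro hyc
        rcases Classical.em (y = a) with hya | hya
        · exact hac (hya ▸ hyc)
        · have hxa : x = a := by
            by_contra hxa
            exact hya (h1 hxa)
          rcases Classical.em (y = a') with hyb | hyb
          · exact hbc (hyb ▸ hyc)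
          · have hxb : x = a' := by
              by_contra hxb
              exact hyb (h2 hxb)
            exact hab (hxa ▸ hxb ▸ rfl)
    obtain ⟨w, hxw, hyw⟩ := hpick2
    have e1 : bb g x = (F g x y + F g x w - F g y w) / 2 :=
      bval g x y w hxy hxw hyw
    have e2 : bb g y = (F g y x + F g y w - F g x w) / 2 :=
      bval g y x w hxy.symm hyw hxw
    have e3 : F g y x = F g x y := (hsym x y hxy g).symm
    have : bb g x + bb g y = F g x y := by
      rw [e1, e2, e3]; ring
    exact this
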